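/- Let ≤ be a tree order on a finite set V, let G be its comparability graph, and let D ≥ 0 be an integer. Define g : V → {1,2,3,…} by well-founded recursion on <: g(u) is the least positive integer i such that u has at most D strict descendants v with g(v) = i (this is well defined since V is finite). Then for every integer C ≥ 1, G admits a (C,D)-coloring if and only if g(u) ≤ C for every u ∈ V. -/

import Mathlib

/-- The deficiency of a vertex `v` under a coloring `c`: the number of neighbors
of `v` whose color equals `c v`. -/
noncomputable def deficiency {V α : Type*} (G : SimpleGraph V) (c : V → α) (v : V) : ℕ :=
  {w | G.Adj v w ∧ c w = c v}.ncard

/-- `c` is a `(C,D)`-coloring (with colors `Fin C`): every vertex has at most `D`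
neighbors of its own color. -/
def IsDefColoring {V α : Type*} (G : SimpleGraph V) (D : ℕ) (c : V → α) : Prop :=
  ∀ v, deficiency G c v ≤ D

/-- A partial order is a tree order if every up-set `{w | v ≤ w}` is a chain. -/
def IsTreeOrder (V : Type*) [PartialOrder V] : Prop :=
  ∀ v : V, IsChain (· ≤ ·) {w | v ≤ w}

/-- The comparability graph of a partial order: `u` and `v` are adjacent iff they are
distinct and comparable. -/
def compGraph (V : Type*) [PartialOrder V] : SimpleGraph V where
  Adj u v := u ≠ v ∧ (u ≤ v ∨ v ≤ u)
  symm := by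
    constructor
    intro u v h
    exact ⟨h.1.symm, h.2.symm⟩
  loopless := by
    constructor
    intro v h
    exact h.1 rfl

open Finset in
private lemma merge_lemma {C D q : ℕ} {ι : Type*} [DecidableEq ι] (M : Finset ι) (hM : M.Nonempty)
    (n : ι → Fin C → ℕ) (t : ι → ℕ)
    (h : ∀ m ∈ M, q * (D + 1) + t m ≤ ∑ j, min (n m j) (D + 1)) :
    q * (D + 1) + min (∑ m ∈ M, t m) (D + 1) ≤ ∑ j, min (∑ m ∈ M, n m j) (D + 1) := by
  classical
  set F : Finset (Fin C) := Finset.univ.filter (fun j => D + 1 ≤ ∑ m ∈ M, n m j) with hF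
  have hsplit : ∑ j, min (∑ m ∈ M, n m j) (D + 1)
      = F.card * (D + 1) + ∑ j ∈ Fᶜ, min (∑ m ∈ M, n m j) (D + 1) := by
    rw [← Finset.sum_add_sum_compl F]
    congr 1
    rw [Finset.sum_congr rfl (g := fun _ => D + 1) (fun j hj => by
      simp only [hF, Finset.mem_filter] at hj
      exact min_eq_right hj.2), Finset.sum_const, smul_eq_mul]
  have hFc : ∀ j ∈ Fᶜ, ∀ m ∈ M, n m j ≤ D := by
    intro j hj m hm
    simp only [hF, Finset.mem_compl, Finset.mem_filter, Finset.mem_univ, true_and,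
      not_le] at hj
    have : n m j ≤ ∑ m ∈ M, n m j := Finset.single_le_sum (f := fun m => n m j) (fun i _ => Nat.zero_le _) hm
    omega
  by_cases hf : q + 1 ≤ F.card
  · have h1 : (q + 1) * (D + 1) ≤ F.card * (D + 1) := Nat.mul_le_mul_right _ hf
    have h2 : min (∑ m ∈ M, t m) (D + 1) ≤ D + 1 := min_le_right _ _
    have h3 : (q + 1) * (D + 1) = q * (D + 1) + (D + 1) := by ring
    omega
  · push_neg at hf
    have hfq : F.card ≤ q := by omega
    -- per-element estimate
    have key : ∀ m ∈ M, q * (D + 1) + t m ≤ F.card * (D + 1) + ∑ j ∈ Fᶜ, n m j := by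
      intro m hm
      have := h m hm
      have hsplitm : ∑ j, min (n m j) (D + 1)
          = (∑ j ∈ F, min (n m j) (D + 1)) + ∑ j ∈ Fᶜ, min (n m j) (D + 1) :=
        (Finset.sum_add_sum_compl F _).symm
      have h1 : ∑ j ∈ F, min (n m j) (D + 1) ≤ F.card * (D + 1) := by
        calc ∑ j ∈ F, min (n m j) (D + 1) ≤ ∑ _j ∈ F, (D + 1) :=
              Finset.sum_le_sum (fun j _ => min_le_right _ _)
          _ = F.card * (D + 1) := by rw [Finset.sum_const, smul_eq_mul]
      have h2 : ∑ j ∈ Fᶜ, min (n m j) (D + 1) = ∑ j ∈ Fᶜ, n m j :=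
        Finset.sum_congr rfl (fun j hj => min_eq_left (by have := hFc j hj m hm; omega))
      omega
    obtain ⟨m₀, hm₀⟩ := hM
    have key2 : ∀ m ∈ M.erase m₀, t m ≤ ∑ j ∈ Fᶜ, n m j := by
      intro m hm
      have hmM := Finset.mem_of_mem_erase hm
      have := key m hmM
      have : F.card * (D + 1) ≤ q * (D + 1) := Nat.mul_le_mul_right _ hfq
      omega
    have hswap : ∑ j ∈ Fᶜ, ∑ m ∈ M, n m j = ∑ m ∈ M, ∑ j ∈ Fᶜ, n m j := Finset.sum_comm
    have hcongr : ∑ j ∈ Fᶜ, min (∑ m ∈ M, n m j) (D + 1) = ∑ j ∈ Fᶜ, ∑ m ∈ M, n m j := by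
      refine Finset.sum_congr rfl (fun j hj => min_eq_left ?_)
      simp only [hF, Finset.mem_compl, Finset.mem_filter, Finset.mem_univ, true_and,
        not_le] at hj
      omega
    have e1 : ∑ m ∈ M, ∑ j ∈ Fᶜ, n m j
        = (∑ j ∈ Fᶜ, n m₀ j) + ∑ m ∈ M.erase m₀, ∑ j ∈ Fᶜ, n m j :=
      (Finset.add_sum_erase M _ hm₀).symm
    have e2 : ∑ m ∈ M, t m = t m₀ + ∑ m ∈ M.erase m₀, t m :=
      (Finset.add_sum_erase M _ hm₀).symm
    have e3 : ∑ m ∈ M.erase m₀, t m ≤ ∑ m ∈ M.erase m₀, ∑ j ∈ Fᶜ, n m j :=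
      Finset.sum_le_sum key2
    have e4 := key m₀ hm₀
    have e5 : min (∑ m ∈ M, t m) (D + 1) ≤ ∑ m ∈ M, t m := min_le_left _ _
    omega

private lemma ncard_filter_eq {V : Type*} [Fintype V] (p : V → Prop) [DecidablePred p] :
    {v | p v}.ncard = (Finset.univ.filter p).card := by
  rw [Set.ncard_eq_toFinset_card', Set.toFinset_setOf]

private lemma forward_lemma {V : Type*} [Fintype V] [PartialOrder V] (htree : IsTreeOrder V)
    (D : ℕ) (g : V → ℕ)
    (hg : ∀ u : V, IsLeast {i : ℕ | 1 ≤ i ∧ {v | v < u ∧ g v = i}.ncard ≤ D} (g u))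
    (C : ℕ) (c : V → Fin C) (hc : IsDefColoring (compGraph V) D c) :
    ∀ u : V, g u ≤ C := by
  classical
  have hsub : ∀ a b : ℕ, 1 ≤ a → (a - 1) * b + b = a * b := by
    intro a b h
    obtain ⟨a', rfl⟩ : ∃ a', a = a' + 1 := ⟨a - 1, by omega⟩
    simp [add_mul]
  have hg1 : ∀ u : V, 1 ≤ g u := fun u => (hg u).1.1
  have hgD : ∀ u : V, (Finset.univ.filter (fun v => v < u ∧ g v = g u)).card ≤ D := by
    intro u
    have h1 := (hg u).1.2
    rwa [ncard_filter_eq] at h1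
  have hbig : ∀ (u : V) (i : ℕ), 1 ≤ i → i < g u →
      D + 1 ≤ (Finset.univ.filter (fun v => v < u ∧ g v = i)).card := by
    intro u i h1 h2
    by_contra hlt
    push_neg at hlt
    have : g u ≤ i := (hg u).2 ⟨h1, by rw [ncard_filter_eq]; omega⟩
    omega
  have hdef : ∀ u : V, (Finset.univ.filter (fun v => v < u ∧ c v = c u)).card ≤ D := by
    intro u
    have h1 := hc u
    unfold deficiency at h1
    rw [ncard_filter_eq (fun w => (compGraph V).Adj u w ∧ c w = c u)] at h1
    refine le_trans (Finset.card_le_card ?_) h1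
    intro v hv
    simp only [Finset.mem_filter, Finset.mem_univ, true_and] at hv ⊢
    exact ⟨⟨(ne_of_lt hv.1).symm, Or.inr (le_of_lt hv.1)⟩, hv.2⟩
  set Dj : Fin C → V → Finset V := fun j u => Finset.univ.filter (fun v => v ≤ u ∧ c v = j)
    with hDj
  set φ : V → ℕ := fun u => ∑ j, min (Dj j u).card (D + 1) with hφ
  set tc : V → ℕ := fun u => (Finset.univ.filter (fun v => v ≤ u ∧ g v = g u)).card with htc
  have claimW : ∀ u : V, g u * (D + 1) + tc u ≤ φ u + (D + 1) := by
    intro u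
    refine (wellFounded_lt (α := V)).induction
      (C := fun u => g u * (D + 1) + tc u ≤ φ u + (D + 1)) u ?_
    intro u IH
    have main : ∀ ℓ : ℕ, 1 ≤ ℓ →
        (Finset.univ.filter (fun v => v < u ∧ g v = ℓ)).Nonempty →
        ℓ * (D + 1)
          + min (Finset.univ.filter (fun v => v < u ∧ g v = ℓ)).card (D + 1)
          < φ u + (D + 1) := by
      intro ℓ hℓ hY
      set Y := Finset.univ.filter (fun v => v < u ∧ g v = ℓ) with hYdef
      set P : V → Prop := fun m => (m < u ∧ g m = ℓ) ∧
        ∀ y : V, (y < u ∧ g y = ℓ) → m ≤ y → y = m with hPdef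
      have hmax : ∀ y, y < u → g y = ℓ → ∃ m, P m ∧ y ≤ m := by
        intro y hy hgy
        obtain ⟨m, hm, hmmax⟩ := Set.Finite.exists_maximalFor (id : V → V)
          {z | (z < u ∧ g z = ℓ) ∧ y ≤ z} (Set.toFinite _) ⟨y, ⟨hy, hgy⟩, le_refl y⟩
        refine ⟨m, ⟨hm.1, ?_⟩, hm.2⟩
        intro y' hy' hle
        exact le_antisymm (hmmax ⟨hy', le_trans hm.2 hle⟩ hle) hle
      have huniq : ∀ y m₁ m₂, P m₁ → P m₂ → y ≤ m₁ → y ≤ m₂ → m₁ = m₂ := by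
        intro y m₁ m₂ h₁ h₂ hy₁ hy₂
        by_contra hne
        rcases htree y hy₁ hy₂ (fun he => hne he) with h | h
        · exact hne ((h₁.2 m₂ h₂.1 h).symm)
        · exact hne (h₂.2 m₁ h₁.1 h)
      set M : Finset V := Finset.univ.filter P with hMdef
      have hMmem : ∀ m, m ∈ M ↔ P m := by
        intro m
        rw [hMdef, Finset.mem_filter]
        simp only [Finset.mem_univ, true_and]
      obtain ⟨y₀, hy₀⟩ := hY
      simp only [hYdef, Finset.mem_filter, Finset.mem_univ, true_and] at hy₀
      obtain ⟨m₀, hm₀P, _⟩ := hmax y₀ hy₀.1 hy₀.2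
      have hMne : M.Nonempty := ⟨m₀, (hMmem m₀).2 hm₀P⟩
      have hdown : ∀ m₁ ∈ M, ∀ m₂ ∈ M, m₁ ≠ m₂ → ∀ v : V, v ≤ m₁ → v ≤ m₂ → False := by
        intro m₁ hm₁ m₂ hm₂ hne v hv₁ hv₂
        exact hne (huniq v m₁ m₂ ((hMmem m₁).1 hm₁) ((hMmem m₂).1 hm₂) hv₁ hv₂)
      set Tm : V → Finset V := fun m => Finset.univ.filter (fun v => v ≤ m ∧ g v = ℓ)
        with hTmdef
      have hTdisj : ∀ m₁ ∈ M, ∀ m₂ ∈ M, m₁ ≠ m₂ → Disjoint (Tm m₁) (Tm m₂) := by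
        intro m₁ hm₁ m₂ hm₂ hne
        rw [Finset.disjoint_left]
        intro v hv₁ hv₂
        simp only [hTmdef, Finset.mem_filter, Finset.mem_univ, true_and] at hv₁ hv₂
        exact hdown m₁ hm₁ m₂ hm₂ hne v hv₁.1 hv₂.1
      have hYpart : Y = M.biUnion Tm := by
        ext y
        simp only [hYdef, hTmdef, Finset.mem_filter, Finset.mem_univ, true_and,
          Finset.mem_biUnion]
        constructor
        · rintro ⟨hy, hgy⟩
          obtain ⟨m, hmP, hym⟩ := hmax y hy hgy
          exact ⟨m, (hMmem m).2 hmP, hym, hgy⟩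
        · rintro ⟨m, hm, hym, hgy⟩
          exact ⟨lt_of_le_of_lt hym ((hMmem m).1 hm).1.1, hgy⟩
      have hYcard : Y.card = ∑ m ∈ M, (Tm m).card := by
        rw [hYpart, Finset.card_biUnion hTdisj]
      have hDdisj : ∀ j : Fin C, ∀ m₁ ∈ M, ∀ m₂ ∈ M, m₁ ≠ m₂ →
          Disjoint (Dj j m₁) (Dj j m₂) := by
        intro j m₁ hm₁ m₂ hm₂ hne
        rw [Finset.disjoint_left]
        intro v hv₁ hv₂
        simp only [hDj, Finset.mem_filter, Finset.mem_univ, true_and] at hv₁ hv₂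
        exact hdown m₁ hm₁ m₂ hm₂ hne v hv₁.1 hv₂.1
      have hBsub : ∀ j : Fin C, M.biUnion (fun m => Dj j m) ⊆ (Dj j u).erase u := by
        intro j v hv
        simp only [Finset.mem_biUnion] at hv
        obtain ⟨m, hm, hvm⟩ := hv
        simp only [hDj, Finset.mem_filter, Finset.mem_univ, true_and] at hvm
        have hmu : m < u := ((hMmem m).1 hm).1.1
        have hvu : v < u := lt_of_le_of_lt hvm.1 hmu
        simp only [Finset.mem_erase, hDj, Finset.mem_filter, Finset.mem_univ, true_and]
        exact ⟨ne_of_lt hvu, le_of_lt hvu, hvm.2⟩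
      have hBcard : ∀ j : Fin C, ∑ m ∈ M, (Dj j m).card ≤ ((Dj j u).erase u).card := by
        intro j
        rw [← Finset.card_biUnion (hDdisj j)]
        exact Finset.card_le_card (hBsub j)
      have herase : ∀ j : Fin C, ((Dj j u).erase u).card ≤ (Dj j u).card :=
        fun j => Finset.card_le_card (Finset.erase_subset _ _)
      have hper : ∀ m ∈ M, (ℓ - 1) * (D + 1) + (Tm m).card
          ≤ ∑ j, min ((Dj j m).card) (D + 1) := by
        intro m hm
        have hmP := (hMmem m).1 hm
        have h1 : g m * (D + 1) + tc m ≤ φ m + (D + 1) := IH m hmP.1.1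
        have h2 : tc m = (Tm m).card := by
          rw [htc]
          simp only [hTmdef, hmP.1.2]
        have h3 : g m = ℓ := hmP.1.2
        rw [h2, h3] at h1
        have h4 := hsub ℓ (D + 1) hℓ
        have h5 : φ m = ∑ j, min ((Dj j m).card) (D + 1) := by rw [hφ]
        omega
      have hml : (ℓ - 1) * (D + 1) + min (∑ m ∈ M, (Tm m).card) (D + 1)
          ≤ ∑ j, min (∑ m ∈ M, (Dj j m).card) (D + 1) :=
        merge_lemma (q := ℓ - 1) (D := D) M hMne
          (fun m j => (Dj j m).card) (fun m => (Tm m).card) hper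
      rw [← hYcard] at hml
      have hcu : u ∈ Dj (c u) u := by
        simp only [hDj, Finset.mem_filter, Finset.mem_univ, true_and]
        exact ⟨le_refl u, trivial⟩
      have hcu1 : (Dj (c u) u).card ≤ D + 1 := by
        have hsub2 : Dj (c u) u ⊆ insert u (Finset.univ.filter (fun v => v < u ∧ c v = c u)) := by
          intro v hv
          simp only [hDj, Finset.mem_filter, Finset.mem_univ, true_and] at hv
          rcases lt_or_eq_of_le hv.1 with h | h
          · exact Finset.mem_insert_of_mem (by
              simp only [Finset.mem_filter, Finset.mem_univ, true_and]; exact ⟨h, hv.2⟩)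
          · rw [h]; exact Finset.mem_insert_self _ _
        calc (Dj (c u) u).card ≤ _ := Finset.card_le_card hsub2
          _ ≤ (Finset.univ.filter (fun v => v < u ∧ c v = c u)).card + 1 :=
            Finset.card_insert_le _ _
          _ ≤ D + 1 := by have := hdef u; omega
      have herase2 : ((Dj (c u) u).erase u).card + 1 = (Dj (c u) u).card :=
        Finset.card_erase_add_one hcu
      have hstrict : ∑ j, min (∑ m ∈ M, (Dj j m).card) (D + 1) < φ u := by
        rw [hφ]
        refine Finset.sum_lt_sum (fun j _ => ?_) ⟨c u, Finset.mem_univ _, ?_⟩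
        · exact min_le_min (le_trans (hBcard j) (herase j)) (le_refl _)
        · have l1 : min (∑ m ∈ M, (Dj (c u) m).card) (D + 1) ≤ ∑ m ∈ M, (Dj (c u) m).card :=
            min_le_left _ _
          have l2 := hBcard (c u)
          have l3 : min (Dj (c u) u).card (D + 1) = (Dj (c u) u).card := min_eq_left hcu1
          omega
      have h5 := hsub ℓ (D + 1) hℓ
      omega
    have htcu : tc u = (Finset.univ.filter (fun v => v < u ∧ g v = g u)).card + 1 := by
      have heq : Finset.univ.filter (fun v => v ≤ u ∧ g v = g u)
          = insert u (Finset.univ.filter (fun v => v < u ∧ g v = g u)) := by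
        ext v
        simp only [Finset.mem_filter, Finset.mem_univ, true_and, Finset.mem_insert]
        constructor
        · rintro ⟨hle, hgv⟩
          rcases lt_or_eq_of_le hle with h | h
          · exact Or.inr ⟨h, hgv⟩
          · exact Or.inl h
        · rintro (rfl | ⟨hlt, hgv⟩)
          · exact ⟨le_refl _, rfl⟩
          · exact ⟨le_of_lt hlt, hgv⟩
      rw [htc]
      simp only
      rw [heq, Finset.card_insert_of_notMem (by
        simp only [Finset.mem_filter, Finset.mem_univ, true_and, lt_self_iff_false,
          false_and, not_false_iff])]
    by_cases hT : (Finset.univ.filter (fun v => v < u ∧ g v = g u)).Nonempty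
    · have h1 := main (g u) (hg1 u) hT
      have h2 : min (Finset.univ.filter (fun v => v < u ∧ g v = g u)).card (D + 1)
          = (Finset.univ.filter (fun v => v < u ∧ g v = g u)).card :=
        min_eq_left (by have := hgD u; omega)
      omega
    · rw [Finset.not_nonempty_iff_eq_empty] at hT
      have hTc : (Finset.univ.filter (fun v => v < u ∧ g v = g u)).card = 0 := by
        rw [hT]; rfl
      by_cases hgu1 : g u = 1
      · have hφ1 : 1 ≤ φ u := by
          rw [hφ]
          have hmem : u ∈ Dj (c u) u := by
            simp only [hDj, Finset.mem_filter, Finset.mem_univ, true_and]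
            exact ⟨le_refl u, trivial⟩
          have h1 : 1 ≤ min (Dj (c u) u).card (D + 1) := by
            have := Finset.card_pos.2 ⟨u, hmem⟩
            omega
          calc 1 ≤ min (Dj (c u) u).card (D + 1) := h1
            _ ≤ ∑ j, min (Dj j u).card (D + 1) :=
              Finset.single_le_sum (f := fun j => min (Dj j u).card (D + 1))
                (fun j _ => Nat.zero_le _) (Finset.mem_univ _)
        have hmul : g u * (D + 1) = D + 1 := by rw [hgu1]; ring
        omega
      · have hgu2 : 2 ≤ g u := by have := hg1 u; omega
        have hbigY := hbig u (g u - 1) (by omega) (by omega)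
        have hYne : (Finset.univ.filter (fun v => v < u ∧ g v = g u - 1)).Nonempty := by
          rw [← Finset.card_pos]; omega
        have h1 := main (g u - 1) (by omega) hYne
        have h2 : min (Finset.univ.filter (fun v => v < u ∧ g v = g u - 1)).card (D + 1)
            = D + 1 := min_eq_right hbigY
        rw [h2] at h1
        have h3 := hsub (g u) (D + 1) (hg1 u)
        omega
  intro u
  have h1 := claimW u
  have h2 : φ u ≤ C * (D + 1) := by
    rw [hφ]
    calc ∑ j, min (Dj j u).card (D + 1) ≤ ∑ _j : Fin C, (D + 1) :=
      Finset.sum_le_sum (fun j _ => min_le_right _ _)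
      _ = C * (D + 1) := by rw [Finset.sum_const, smul_eq_mul, Finset.card_univ,
        Fintype.card_fin]
  have h3 : 1 ≤ tc u := by
    rw [htc]
    refine Finset.card_pos.2 ⟨u, ?_⟩
    simp only [Finset.mem_filter, Finset.mem_univ, true_and]
    exact ⟨le_refl u, trivial⟩
  by_contra hCu
  push_neg at hCu
  have h4 : (C + 1) * (D + 1) ≤ g u * (D + 1) := Nat.mul_le_mul_right _ (by omega)
  have h5 : (C + 1) * (D + 1) = C * (D + 1) + (D + 1) := by ring
  omega

private lemma backward_lemma {V : Type*} [Fintype V] [PartialOrder V] (htree : IsTreeOrder V)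
    (D : ℕ) (g : V → ℕ)
    (hg : ∀ u : V, IsLeast {i : ℕ | 1 ≤ i ∧ {v | v < u ∧ g v = i}.ncard ≤ D} (g u))
    (C : ℕ) (hC : 1 ≤ C) (hle : ∀ u : V, g u ≤ C) :
    ∃ c : V → Fin C, IsDefColoring (compGraph V) D c := by
  have hg1 : ∀ u : V, 1 ≤ g u := fun u => (hg u).1.1
  set c : V → Fin C := fun u => ⟨g u - 1, by have := hg1 u; have := hle u; omega⟩ with hcdef
  refine ⟨c, ?_⟩
  intro u
  unfold deficiency
  have hcc : ∀ w v : V, c w = c v ↔ g w = g v := by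
    intro w v
    constructor
    · intro h
      have h1 : g w - 1 = g v - 1 := congrArg Fin.val h
      have := hg1 w; have := hg1 v; omega
    · intro h
      apply Fin.ext
      show g w - 1 = g v - 1
      rw [h]
  have hSeq : {w | (compGraph V).Adj u w ∧ c w = c u}
      = {w | (compGraph V).Adj u w ∧ g w = g u} := by
    ext w
    simp only [Set.mem_setOf_eq, hcc]
  rw [hSeq]
  have hAdj : ∀ w : V, (compGraph V).Adj u w ↔ u ≠ w ∧ (u ≤ w ∨ w ≤ u) := fun w => Iff.rfl
  by_cases hA : ∃ w, u < w ∧ g w = g u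
  · obtain ⟨w₀, hw₀⟩ := hA
    obtain ⟨m, hm, hmmax⟩ := Set.Finite.exists_maximalFor (id : V → V)
      {w | u < w ∧ g w = g u} (Set.toFinite _) ⟨w₀, hw₀⟩
    have hum : u < m := hm.1
    have hgm : g m = g u := hm.2
    have hgreat : ∀ a : V, u < a → g a = g u → a ≤ m := by
      intro a ha hga
      by_cases hae : a = m
      · rw [hae]
      rcases htree u (le_of_lt ha) (le_of_lt hum) hae with h | h
      · exact h
      · exact hmmax ⟨ha, hga⟩ h
    have hsub : {w | (compGraph V).Adj u w ∧ g w = g u}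
        ⊆ insert m ({v | v < m ∧ g v = g m} \ {u}) := by
      rintro w ⟨⟨hne, hcomp⟩, hgw⟩
      by_cases hwm : w = m
      · rw [hwm]; exact Set.mem_insert _ _
      · refine Set.mem_insert_of_mem _ ⟨⟨?_, by rw [hgm]; exact hgw⟩, ?_⟩
        · rcases hcomp with h | h
          · have h1 : u < w := lt_of_le_of_ne h hne
            exact lt_of_le_of_ne (hgreat w h1 hgw) hwm
          · have h1 : w < u := lt_of_le_of_ne h (fun he => hne he.symm)
            exact lt_trans h1 hum
        · simp only [Set.mem_singleton_iff]
          exact fun he => hne he.symm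
    have humem : u ∈ {v | v < m ∧ g v = g m} := ⟨hum, hgm.symm⟩
    have hcard : ({v | v < m ∧ g v = g m} \ {u}).ncard
        = {v | v < m ∧ g v = g m}.ncard - 1 :=
      Set.ncard_diff_singleton_of_mem humem
    have h1 : {v | v < m ∧ g v = g m}.ncard ≤ D := (hg m).1.2
    have h2 : 0 < {v | v < m ∧ g v = g m}.ncard :=
      (Set.ncard_pos (Set.toFinite _)).2 ⟨u, humem⟩
    have h3 := Set.ncard_le_ncard hsub (Set.toFinite _)
    have h4 := Set.ncard_insert_le m ({v | v < m ∧ g v = g m} \ {u})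
    omega
  · push_neg at hA
    have hsub : {w | (compGraph V).Adj u w ∧ g w = g u} ⊆ {v | v < u ∧ g v = g u} := by
      rintro w ⟨⟨hne, hcomp⟩, hgw⟩
      rcases hcomp with h | h
      · exact absurd hgw (hA w (lt_of_le_of_ne h hne))
      · exact ⟨lt_of_le_of_ne h (fun he => hne he.symm), hgw⟩
    exact le_trans (Set.ncard_le_ncard hsub (Set.toFinite _)) (hg u).1.2

/-- Let `g : V → ℕ` be the greedy labeling defined by well-founded recursion: `g u` is
the least positive integer `i` such that `u` has at most `D` strict descendants `v` with
`g v = i` (here characterized by the corresponding `IsLeast` property). Then for every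
`C ≥ 1`, the comparability graph admits a `(C,D)`-coloring iff `g u ≤ C` for all `u`. -/
theorem stmt7 {V : Type*} [Fintype V] [PartialOrder V] (htree : IsTreeOrder V)
    (D : ℕ) (g : V → ℕ)
    (hg : ∀ u : V, IsLeast {i : ℕ | 1 ≤ i ∧ {v | v < u ∧ g v = i}.ncard ≤ D} (g u))
    (C : ℕ) (hC : 1 ≤ C) :
    (∃ c : V → Fin C, IsDefColoring (compGraph V) D c) ↔ ∀ u : V, g u ≤ C := by
  constructor
  · rintro ⟨c, hc⟩
    exact forward_lemma htree D g hg C c hc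
  · intro h
    exact backward_lemma htree D g hg C hC h
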